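/- For n ≥ 1 and real p with 1/2 ≤ p ≤ 1: Σ_{i=0}^{n} max(p·C(n−1,i−1) + (1−p)·C(n−1,i), (1−p)·C(n−1,i−1) + p·C(n−1,i)) = 2^{n−1} + (2p−1)·C(n−1, ⌊(n−1)/2⌋), with the convention C(n−1,−1) = C(n−1,n) = 0. -/

import Mathlib

/-- Shifted binomial coefficient sequence: `F m 0 = 0`, `F m (j+1) = C(m,j)`. -/
noncomputable def Fseq (m : ℕ) : ℕ → ℝ
  | 0 => 0
  | j + 1 => (m.choose j : ℝ)

lemma choose_mono_mid (m j : ℕ) (h : j + 1 ≤ m / 2) : m.choose j ≤ m.choose (j + 1) := by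
  have key := Nat.choose_succ_right_eq m j
  have h2 : j + 1 ≤ m - j := by omega
  have h3 : m.choose j * (j + 1) ≤ m.choose (j + 1) * (j + 1) := by
    rw [key]; exact Nat.mul_le_mul_left _ h2
  exact Nat.le_of_mul_le_mul_right h3 j.succ_pos

lemma choose_anti_mid (m j : ℕ) (h : m / 2 ≤ j) : m.choose (j + 1) ≤ m.choose j := by
  have key := Nat.choose_succ_right_eq m j
  have h2 : m - j ≤ j + 1 := by omega
  have h3 : m.choose (j + 1) * (j + 1) ≤ m.choose j * (j + 1) := by
    rw [key]; exact Nat.mul_le_mul_left _ h2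
  exact Nat.le_of_mul_le_mul_right h3 j.succ_pos

lemma Fseq_mono (m i : ℕ) (hi : i ≤ m / 2) : Fseq m i ≤ Fseq m (i + 1) := by
  cases i with
  | zero => simp [Fseq]
  | succ j =>
    simp only [Fseq]
    exact_mod_cast choose_mono_mid m j hi

lemma Fseq_anti (m i : ℕ) (hi : m / 2 + 1 ≤ i) : Fseq m (i + 1) ≤ Fseq m i := by
  obtain ⟨j, rfl⟩ : ∃ j, i = j + 1 := ⟨i - 1, by omega⟩
  simp only [Fseq]
  exact_mod_cast choose_anti_mid m j (by omega)

lemma max_lin (p a b : ℝ) (hp : 1 / 2 ≤ p) :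
    max (p * a + (1 - p) * b) ((1 - p) * a + p * b)
      = (a + b) / 2 + (2 * p - 1) * |a - b| / 2 := by
  rcases le_total a b with hab | hab
  · rw [max_eq_right (by nlinarith), abs_of_nonpos (by linarith)]; ring
  · rw [max_eq_left (by nlinarith), abs_of_nonneg (by linarith)]; ring

lemma Fseq_sum (m : ℕ) : ∑ i ∈ Finset.range (m + 2), Fseq m i = 2 ^ m := by
  rw [Finset.sum_range_succ']
  have : ∀ i, Fseq m (i + 1) = (m.choose i : ℝ) := fun i => rfl
  simp only [this, Fseq]
  rw [← Nat.cast_sum]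
  rw [Nat.sum_range_choose]
  push_cast
  ring

lemma Fseq_sum' (m : ℕ) : ∑ i ∈ Finset.range (m + 2), Fseq m (i + 1) = 2 ^ m := by
  have : ∀ i, Fseq m (i + 1) = (m.choose i : ℝ) := fun i => rfl
  simp only [this]
  rw [Finset.sum_range_succ, ← Nat.cast_sum, Nat.sum_range_choose]
  simp [Nat.choose_succ_self]

lemma abs_sum (m : ℕ) :
    ∑ i ∈ Finset.range (m + 2), |Fseq m i - Fseq m (i + 1)|
      = 2 * (m.choose (m / 2) : ℝ) := by
  set h := m / 2 with hh
  have hhm : h + 1 ≤ m + 2 := by omega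
  rw [← Finset.sum_range_add_sum_Ico _ hhm]
  have e1 : ∑ i ∈ Finset.range (h + 1), |Fseq m i - Fseq m (i + 1)|
      = ∑ i ∈ Finset.range (h + 1), (Fseq m (i + 1) - Fseq m i) := by
    apply Finset.sum_congr rfl
    intro i hi
    rw [Finset.mem_range] at hi
    rw [abs_sub_comm, abs_of_nonneg (sub_nonneg.2 (Fseq_mono m i (by omega)))]
  have e2 : ∑ i ∈ Finset.Ico (h + 1) (m + 2), |Fseq m i - Fseq m (i + 1)|
      = ∑ i ∈ Finset.Ico (h + 1) (m + 2), (Fseq m i - Fseq m (i + 1)) := by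
    apply Finset.sum_congr rfl
    intro i hi
    rw [Finset.mem_Ico] at hi
    rw [abs_of_nonneg (sub_nonneg.2 (Fseq_anti m i (by omega)))]
  rw [e1, e2, Finset.sum_range_sub]
  have e3 : ∑ i ∈ Finset.Ico (h + 1) (m + 2), (Fseq m i - Fseq m (i + 1))
      = Fseq m (h + 1) - Fseq m (m + 2) := by
    rw [Finset.sum_Ico_eq_sum_range]
    have e4 : ∀ i, Fseq m (h + 1 + i) - Fseq m (h + 1 + i + 1)
        = (fun j => Fseq m (h + 1 + j)) i - (fun j => Fseq m (h + 1 + j)) (i + 1) := by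
      intro i; simp [add_assoc]
    simp only [e4]
    rw [Finset.sum_range_sub' (fun j => Fseq m (h + 1 + j))]
    congr 2
    omega
  rw [e3]
  have : Fseq m (m + 2) = (m.choose (m + 1) : ℝ) := rfl
  rw [this, Nat.choose_succ_self]
  have : Fseq m (h + 1) = (m.choose h : ℝ) := rfl
  rw [this]
  have h0 : Fseq m 0 = 0 := rfl
  rw [h0]
  push_cast
  ring

/-- closed form identity underlying the posterior vulnerability of
noise-then-shuffle in the binary case, with the convention C(n−1,−1) = C(n−1,n) = 0. -/
theorem stmt5 (n : ℕ) (hn : 1 ≤ n) (p : ℝ) (hp : 1 / 2 ≤ p) (hp1 : p ≤ 1) :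
    let c : ℤ → ℝ := fun j => if 0 ≤ j then ((n - 1).choose j.toNat : ℝ) else 0
    ∑ i ∈ Finset.range (n + 1),
        max (p * c ((i : ℤ) - 1) + (1 - p) * c (i : ℤ))
            ((1 - p) * c ((i : ℤ) - 1) + p * c (i : ℤ))
      = 2 ^ (n - 1) + (2 * p - 1) * ((n - 1).choose ((n - 1) / 2)) := by
  intro c
  set m := n - 1 with hm
  have hn2 : n + 1 = m + 2 := by omega
  have hc1 : ∀ i : ℕ, c ((i : ℤ) - 1) = Fseq m i := by
    intro i
    cases i with
    | zero => simp [c, Fseq]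
    | succ j =>
      have : ((j + 1 : ℕ) : ℤ) - 1 = (j : ℤ) := by push_cast; ring
      rw [this]
      simp [c, Fseq, m]
  have hc2 : ∀ i : ℕ, c (i : ℤ) = Fseq m (i + 1) := by
    intro i; simp [c, Fseq, m]
  rw [hn2]
  calc ∑ i ∈ Finset.range (m + 2),
        max (p * c ((i : ℤ) - 1) + (1 - p) * c (i : ℤ))
            ((1 - p) * c ((i : ℤ) - 1) + p * c (i : ℤ))
      = ∑ i ∈ Finset.range (m + 2),
          ((Fseq m i + Fseq m (i + 1)) / 2
            + (2 * p - 1) * |Fseq m i - Fseq m (i + 1)| / 2) := by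
        apply Finset.sum_congr rfl
        intro i _
        rw [hc1 i, hc2 i, max_lin _ _ _ hp]
    _ = (∑ i ∈ Finset.range (m + 2), (Fseq m i + Fseq m (i + 1))) / 2
          + (2 * p - 1) * (∑ i ∈ Finset.range (m + 2), |Fseq m i - Fseq m (i + 1)|) / 2 := by
        rw [Finset.sum_add_distrib, Finset.sum_div, ← Finset.sum_div, ← Finset.sum_div,
          ← Finset.mul_sum]
    _ = 2 ^ m + (2 * p - 1) * (m.choose (m / 2) : ℝ) := by
        rw [Finset.sum_add_distrib, Fseq_sum, Fseq_sum', abs_sum]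
        ring
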